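/- For all real x with 0 < x ≤ 1 and real μ ≥ 1, the function f(x) = ((1+x)^μ − (μ²/(μ+1))·x − 1)/x^μ is monotonically decreasing in x on (0,1]. -/

import Mathlib

open Real Set

lemma key_ineq (μ x : ℝ) (hμ : 1 ≤ μ) (hx : 0 < x) (hx1 : x ≤ 1) :
    1 + (μ * (μ - 1) / (μ + 1)) * x ≤ (1 + x) ^ (μ - 1) := by
  have hμ1 : (0:ℝ) < μ + 1 := by linarith
  rcases le_or_gt 2 μ with hp1 | hp1
  · -- μ ≥ 2: Bernoulli
    have hb := one_add_mul_self_le_rpow_one_add (s := x) (by linarith) (p := μ - 1) (by linarith)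
    have : μ * (μ - 1) / (μ + 1) * x ≤ (μ - 1) * x := by
      rw [div_mul_eq_mul_div, div_le_iff₀ hμ1]
      nlinarith
    linarith
  · -- 1 ≤ μ < 2 : concavity chord
    have hcon := Real.concaveOn_rpow (p := μ - 1) (by linarith) (by linarith)
    have hchord := hcon.2 (Set.mem_Ici.2 (by norm_num : (0:ℝ) ≤ 1))
      (Set.mem_Ici.2 (by norm_num : (0:ℝ) ≤ 2))
      (show (0:ℝ) ≤ 1 - x by linarith) hx.le (by ring : (1 - x) + x = 1)
    simp only [smul_eq_mul, Real.one_rpow] at hchord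
    have h1x : (1 - x) * 1 + x * 2 = 1 + x := by ring
    rw [h1x] at hchord
    have h2p : 1 + (μ - 1) * Real.log 2 ≤ (2:ℝ) ^ (μ - 1) := by
      rw [Real.rpow_def_of_pos (by norm_num)]
      have := Real.add_one_le_exp (Real.log 2 * (μ - 1))
      linarith [this]
    have hlog : (0.6931:ℝ) ≤ Real.log 2 := by
      linarith [Real.log_two_gt_d9]
    have hc : μ * (μ - 1) / (μ + 1) ≤ (μ - 1) * Real.log 2 := by
      rw [div_le_iff₀ hμ1]
      nlinarith [mul_nonneg (by linarith : (0:ℝ) ≤ μ - 1) (by linarith : (0:ℝ) ≤ Real.log 2 - 0.6931),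
        mul_nonneg (by linarith : (0:ℝ) ≤ μ - 1) (by linarith : (0:ℝ) ≤ 2 - μ)]
    nlinarith [hchord, h2p, hc, hx.le]

lemma deriv_aux (μ : ℝ) (hμ : 1 ≤ μ) {x : ℝ} (hx : 0 < x) :
    HasDerivAt (fun x : ℝ => ((1 + x) ^ μ - (μ ^ 2 / (μ + 1)) * x - 1) / x ^ μ)
      (((μ * (1 + x) ^ (μ - 1) - μ ^ 2 / (μ + 1)) * x ^ μ -
        ((1 + x) ^ μ - (μ ^ 2 / (μ + 1)) * x - 1) * (μ * x ^ (μ - 1))) / (x ^ μ) ^ 2) x := by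
  have h1x : (0:ℝ) < 1 + x := by linarith
  have hnum : HasDerivAt (fun x : ℝ => (1 + x) ^ μ - (μ ^ 2 / (μ + 1)) * x - 1)
      (μ * (1 + x) ^ (μ - 1) - μ ^ 2 / (μ + 1)) x := by
    have h1 : HasDerivAt (fun x : ℝ => (1 + x) ^ μ) (μ * (1 + x) ^ (μ - 1)) x := by
      have := (Real.hasDerivAt_rpow_const (x := 1 + x) (p := μ) (Or.inl h1x.ne')).comp x
        ((hasDerivAt_id x).const_add 1)
      simpa [Function.comp_def] using this
    simpa using (h1.sub (((hasDerivAt_id x).const_mul (μ ^ 2 / (μ + 1))))).sub_const 1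
  have hden : HasDerivAt (fun x : ℝ => x ^ μ) (μ * x ^ (μ - 1)) x :=
    Real.hasDerivAt_rpow_const (Or.inl hx.ne')
  exact hnum.div hden (by positivity)

theorem stmt_3 (μ : ℝ) (hμ : 1 ≤ μ) :
    AntitoneOn (fun x : ℝ => ((1 + x) ^ μ - (μ ^ 2 / (μ + 1)) * x - 1) / x ^ μ)
      (Set.Ioc (0 : ℝ) 1) := by
  have hint : interior (Set.Ioc (0:ℝ) 1) = Set.Ioo 0 1 := interior_Ioc
  apply antitoneOn_of_deriv_nonpos (convex_Ioc 0 1)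
  · intro x hx
    exact (deriv_aux μ hμ hx.1).continuousAt.continuousWithinAt
  · rw [hint]
    intro x hx
    exact (deriv_aux μ hμ hx.1).differentiableAt.differentiableWithinAt
  · rw [hint]
    intro x hx
    obtain ⟨hx0, hx1⟩ := hx
    rw [(deriv_aux μ hμ hx0).deriv]
    set c := μ ^ 2 / (μ + 1) with hc
    have h1x : (0:ℝ) < 1 + x := by linarith
    have hxμ : x ^ μ = x ^ (μ - 1) * x := by
      rw [← Real.rpow_add_one hx0.ne']; ring_nf
    have h1xμ : (1 + x) ^ μ = (1 + x) ^ (μ - 1) * (1 + x) := by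
      rw [← Real.rpow_add_one h1x.ne']; ring_nf
    apply div_nonpos_of_nonpos_of_nonneg _ (by positivity)
    rw [hxμ, h1xμ]
    have hkey := key_ineq μ x hμ hx0 hx1.le
    have hxp : (0:ℝ) ≤ x ^ (μ - 1) := by positivity
    have hbr : (μ * (1 + x) ^ (μ - 1) - c) * (x ^ (μ - 1) * x) -
        ((1 + x) ^ (μ - 1) * (1 + x) - c * x - 1) * (μ * x ^ (μ - 1)) =
        x ^ (μ - 1) * (-(μ * (1 + x) ^ (μ - 1)) + c * (μ - 1) * x + μ) := by ring
    rw [hbr]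
    apply mul_nonpos_of_nonneg_of_nonpos hxp
    have hceq : c * (μ - 1) = μ * (μ * (μ - 1) / (μ + 1)) := by
      rw [hc]; ring
    nlinarith [hkey, hμ]
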